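/- For T ≥ 1/3, the function c(k) = sqrt((1 + T k²)·tanh(k)/k) is strictly increasing on (0, ∞). -/

import Mathlib

noncomputable def cT (T k : ℝ) : ℝ := Real.sqrt ((1 + T * k ^ 2) * Real.tanh k / k)

open Real Set

private lemma aux_pos_of_deriv_pos {F F' : ℝ → ℝ} (hF : ∀ x, HasDerivAt F (F' x) x)
    (h0 : F 0 = 0) (hpos : ∀ x > 0, 0 < F' x) : ∀ x > 0, 0 < F x := by
  have hmono : StrictMonoOn F (Ici 0) := by
    apply strictMonoOn_of_deriv_pos (convex_Ici 0)
    · exact fun x _ => (hF x).continuousAt.continuousWithinAt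
    · intro x hx
      rw [interior_Ici] at hx
      rw [(hF x).deriv]
      exact hpos x hx
  intro x hx
  have := hmono (self_mem_Ici) (le_of_lt hx : (0:ℝ) ≤ x) hx
  rwa [h0] at this

private lemma H3_pos : ∀ x > 0, 0 < 6*x*Real.sinh x + (x^2-6)*Real.cosh x + 6 := by
  apply aux_pos_of_deriv_pos (F' := fun x => x^2*Real.sinh x + 8*x*Real.cosh x)
  · intro x
    have h := ((((hasDerivAt_id' (x := x)).const_mul 6).mul (Real.hasDerivAt_sinh x)).add
        (((hasDerivAt_pow 2 x).sub_const 6).mul (Real.hasDerivAt_cosh x))).add_const 6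
    refine h.congr_deriv ?_
    push_cast
    ring
  · simp
  · intro x hx
    have h1 : 0 < Real.sinh x := Real.sinh_pos_iff.mpr hx
    have h2 : 0 < Real.cosh x := Real.cosh_pos x
    positivity

private lemma H2_pos : ∀ x > 0, 0 < (x^2-10)*Real.sinh x + 4*x*Real.cosh x + 6*x := by
  apply aux_pos_of_deriv_pos (F' := fun x => 6*x*Real.sinh x + (x^2-6)*Real.cosh x + 6)
  · intro x
    have h := ((((hasDerivAt_pow 2 x).sub_const 10).mul (Real.hasDerivAt_sinh x)).add
        (((hasDerivAt_id' (x := x)).const_mul 4).mul (Real.hasDerivAt_cosh x))).add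
        ((hasDerivAt_id' (x := x)).const_mul 6)
    refine h.congr_deriv ?_
    have := Real.cosh_sq_sub_sinh_sq x
    push_cast
    nlinarith [this]
  · simp
  · exact H3_pos

private lemma H1_pos : ∀ x > 0, 0 < 2*x*Real.sinh x + (x^2-12)*Real.cosh x + 3*x^2 + 12 := by
  apply aux_pos_of_deriv_pos (F' := fun x => (x^2-10)*Real.sinh x + 4*x*Real.cosh x + 6*x)
  · intro x
    have h := (((((hasDerivAt_id' (x := x)).const_mul 2).mul (Real.hasDerivAt_sinh x)).add
        (((hasDerivAt_pow 2 x).sub_const 12).mul (Real.hasDerivAt_cosh x))).add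
        ((hasDerivAt_pow 2 x).const_mul 3)).add_const 12
    refine h.congr_deriv ?_
    push_cast
    ring
  · simp
  · exact H2_pos

private lemma H0_pos : ∀ x > 0, 0 < (x^2-12)*Real.sinh x + x^3 + 12*x := by
  apply aux_pos_of_deriv_pos (F' := fun x => 2*x*Real.sinh x + (x^2-12)*Real.cosh x + 3*x^2 + 12)
  · intro x
    have h := ((((hasDerivAt_pow 2 x).sub_const 12).mul (Real.hasDerivAt_sinh x)).add
        (hasDerivAt_pow 3 x)).add ((hasDerivAt_id' (x := x)).const_mul 12)
    refine h.congr_deriv ?_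
    push_cast
    ring
  · simp
  · exact H1_pos

private lemma N_pos {T k : ℝ} (hT : 1/3 ≤ T) (hk : 0 < k) :
    0 < (T*k^2 - 1) * (Real.sinh k * Real.cosh k) + (1 + T*k^2) * k := by
  have hsc : Real.sinh k * Real.cosh k = Real.sinh (2*k) / 2 := by
    rw [two_mul, Real.sinh_add]; ring
  have h0 := H0_pos (2*k) (by linarith)
  have hkk : k < Real.sinh k * Real.cosh k := by
    have h1 : 2*k < Real.sinh (2*k) := Real.self_lt_sinh_iff.mpr (by linarith)
    rw [hsc]; linarith
  have key : 0 < (k^2/3 - 1) * (Real.sinh k * Real.cosh k) + (1 + k^2/3) * k := by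
    rw [hsc]; nlinarith [h0]
  have hstep : (k^2/3 - 1) * (Real.sinh k * Real.cosh k) + (1 + k^2/3) * k
      ≤ (T*k^2 - 1) * (Real.sinh k * Real.cosh k) + (1 + T*k^2) * k := by
    nlinarith [hkk, hk, sq_nonneg k]
  linarith

private lemma hasDerivAt_inner {T k : ℝ} (hk : 0 < k) :
    HasDerivAt (fun k => (1 + T * k ^ 2) * Real.tanh k / k)
      (((T*k^2 - 1) * (Real.sinh k * Real.cosh k) + (1 + T*k^2) * k) / (Real.cosh k * k)^2) k := by
  have hfun : (fun k => (1 + T * k ^ 2) * Real.tanh k / k)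
      = fun k : ℝ => (1 + T * k ^ 2) * Real.sinh k / (Real.cosh k * k) := by
    funext x
    rw [Real.tanh_eq_sinh_div_cosh, mul_div_assoc', div_div]
  rw [hfun]
  have hcpos := Real.cosh_pos k
  have hc : Real.cosh k * k ≠ 0 := by positivity
  have hu := (((hasDerivAt_pow 2 k).const_mul T).const_add 1).mul (Real.hasDerivAt_sinh k)
  have hv := (Real.hasDerivAt_cosh k).mul (hasDerivAt_id' (x := k))
  have h := hu.div hv hc
  refine h.congr_deriv ?_
  have hch := Real.cosh_sq_sub_sinh_sq k
  have hD : ((Real.cosh k * k)^2 : ℝ) ≠ 0 := pow_ne_zero 2 hc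
  simp only [Pi.mul_apply]
  rw [div_eq_div_iff hD hD]
  push_cast
  linear_combination (((1 + T*k^2) * k) * (Real.cosh k * k)^2) * hch

theorem cT_strictMonoOn_of_large_tension :
    ∀ T : ℝ, 1 / 3 ≤ T → StrictMonoOn (cT T) (Set.Ioi (0 : ℝ)) := by
  intro T hT
  have hT0 : 0 < T := lt_of_lt_of_le (by norm_num) hT
  have hmono : StrictMonoOn (fun k => (1 + T * k ^ 2) * Real.tanh k / k) (Set.Ioi (0:ℝ)) := by
    apply strictMonoOn_of_deriv_pos (convex_Ioi 0)
    · intro x hx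
      exact (hasDerivAt_inner (T := T) hx).continuousAt.continuousWithinAt
    · intro x hx
      rw [interior_Ioi] at hx
      rw [(hasDerivAt_inner (T := T) hx).deriv]
      have hN := N_pos hT hx
      have hcpos := Real.cosh_pos x
      have hc : (0:ℝ) < (Real.cosh x * x)^2 := pow_pos (mul_pos hcpos hx) 2
      exact div_pos hN hc
  intro a ha b hb hab
  have ha' : (0:ℝ) < a := ha
  have hfa : 0 ≤ (1 + T * a ^ 2) * Real.tanh a / a := by
    have h1 : 0 < Real.tanh a := by
      rw [Real.tanh_eq_sinh_div_cosh]
      exact div_pos (Real.sinh_pos_iff.mpr ha') (Real.cosh_pos a)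
    have h2 : (0:ℝ) < 1 + T * a^2 := by positivity
    positivity
  exact Real.sqrt_lt_sqrt hfa (hmono ha hb hab)
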